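/- Let (M, 𝓜, μ) be a σ-finite separable measure space with 0 < μ(M) ≤ ∞. Let A and B be bounded linear operators on L²(M; dμ) which are both integral operators, with μ⊗μ-measurable kernels A(·,·) and B(·,·) respectively, and suppose A is positivity preserving (equivalently, A(x,y) ≥ 0 μ⊗μ-a.e.). Then B is dominated by A, i.e., |Bf| ≤ A|f| μ-a.e. for every f ∈ L²(M; dμ), if and only if |B(x,y)| ≤ A(x,y) for μ⊗μ-a.e. (x,y) ∈ M × M. -/

import Mathlib

open MeasureTheory
open scoped ComplexOrder ENNReal

open Set
open scoped symmDiff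

lemma abscont {M : Type*} [MeasurableSpace M] {μ : Measure M} {H : M → ℝ}
    (hH : Integrable H μ) {ε : ℝ} (hε : 0 < ε) :
    ∃ r : ℝ, 0 < r ∧ ∀ s : Set M, μ s < ENNReal.ofReal r → ∫ y in s, |H y| ∂μ < ε := by
  obtain ⟨δ, hδ0, hδ⟩ := exists_pos_setLIntegral_lt_of_measure_lt
    (f := fun y => (‖H y‖₊ : ℝ≥0∞)) hH.2.ne (ε := ENNReal.ofReal ε)
    (by simp [hε.ne', ENNReal.ofReal_eq_zero, not_le, hε])
  obtain ⟨r, hr0, hrδ⟩ : ∃ r : ℝ, 0 < r ∧ ENNReal.ofReal r ≤ δ := by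
    rcases eq_or_ne δ ∞ with h | h
    · exact ⟨1, one_pos, by simp [h]⟩
    · have hpos := ENNReal.toReal_pos hδ0.ne' h
      refine ⟨δ.toReal / 2, by linarith, ?_⟩
      rw [ENNReal.ofReal_le_iff_le_toReal h]
      linarith
  refine ⟨r, hr0, fun s hs => ?_⟩
  have h1 : ∫⁻ y in s, ‖H y‖₊ ∂μ < ENNReal.ofReal ε := hδ s (hs.trans_le hrδ)
  have h2 : ∫ y in s, |H y| ∂μ = (∫⁻ y in s, ‖H y‖₊ ∂μ).toReal := by
    simp_rw [← Real.norm_eq_abs]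
    exact integral_norm_eq_lintegral_enorm hH.1.restrict
  rw [h2]
  exact ENNReal.toReal_lt_of_lt_ofReal h1

lemma core {M : Type*} [MeasurableSpace M] (μ : Measure M) [SigmaFinite μ]
    [MeasureTheory.IsSeparable μ] (w : M × M → ℝ) (hw : AEMeasurable w (μ.prod μ))
    (h : ∀ E : Set M, MeasurableSet E → μ E < ∞ →
      ∀ᵐ x ∂μ, IntegrableOn (fun y => w (x, y)) E μ ∧ 0 ≤ ∫ y in E, w (x, y) ∂μ) :
    ∀ᵐ p ∂(μ.prod μ), 0 ≤ w p := by
  obtain ⟨𝒜₀, hcount₀, hdense₀⟩ := exists_countable_measureDense (μ := μ)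
  set 𝒜 : Set (Set M) := {s ∈ 𝒜₀ | μ s ≠ ∞} with h𝒜
  have hcount : 𝒜.Countable := hcount₀.mono (Set.sep_subset _ _)
  have hdense : μ.MeasureDense 𝒜 := hdense₀.fin_meas
  set w' := hw.mk w with hw'
  have hw'meas : Measurable w' := hw.measurable_mk
  have hww' : w =ᵐ[μ.prod μ] w' := hw.ae_eq_mk
  set S : ℕ → Set M := spanningSets μ with hSdef
  have hSmeas : ∀ n, MeasurableSet (S n) := measurableSet_spanningSets μ
  have hSfin : ∀ n, μ (S n) < ∞ := measure_spanningSets_lt_top μ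
  have main : ∀ᵐ x ∂μ, ∀ᵐ y ∂μ, 0 ≤ w' (x, y) := by
    have hS : ∀ᵐ x ∂μ, ∀ n, IntegrableOn (fun y => w (x, y)) (S n) μ := by
      rw [ae_all_iff]
      exact fun n => (h _ (hSmeas n) (hSfin n)).mono fun x hx => hx.1
    have hE : ∀ᵐ x ∂μ, ∀ E ∈ 𝒜, ∀ n : ℕ,
        IntegrableOn (fun y => w (x, y)) (E ∩ S n) μ ∧
          0 ≤ ∫ y in E ∩ S n, w (x, y) ∂μ := by
      rw [ae_ball_iff hcount]
      intro E hEm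
      rw [ae_all_iff]
      intro n
      exact h _ ((hdense.measurable E hEm).inter (hSmeas n))
        (lt_of_le_of_lt (measure_mono inter_subset_right) (hSfin n))
    filter_upwards [hS, hE, Measure.ae_ae_of_ae_prod hww'] with x hx1 hx2 hx3
    -- key : nonneg a.e. on each S n
    have key : ∀ n, ∀ᵐ y ∂(μ.restrict (S n)), 0 ≤ w (x, y) := by
      intro n
      apply ae_nonneg_of_forall_setIntegral_nonneg (hx1 n)
      intro s hs _
      rw [Measure.restrict_restrict hs]
      set t := s ∩ S n with ht
      have htm : MeasurableSet t := hs.inter (hSmeas n)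
      have htfin : μ t ≠ ∞ :=
        (lt_of_le_of_lt (measure_mono inter_subset_right) (hSfin n)).ne
      have htS : t ⊆ S n := inter_subset_right
      have hintt : IntegrableOn (fun y => w (x, y)) t μ := (hx1 n).mono_set htS
      have hH : Integrable ((S n).indicator fun y => w (x, y)) μ :=
        (hx1 n).integrable_indicator (hSmeas n)
      refine le_of_forall_pos_le_add fun ε hε => ?_
      obtain ⟨r, hr0, hr⟩ := abscont hH (half_pos hε)
      obtain ⟨E', hE'𝒜, _, happrox⟩ := hdense.fin_meas_approx htm htfin r hr0
      set u := E' ∩ S n with hu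
      have hum : MeasurableSet u := (hdense.measurable E' hE'𝒜).inter (hSmeas n)
      have huS : u ⊆ S n := inter_subset_right
      obtain ⟨hintu, hu0⟩ := hx2 E' hE'𝒜 n
      -- symmetric difference bound
      have hsub1 : t \ u ⊆ t ∆ E' := fun y hy =>
        Or.inl ⟨hy.1, fun hyE' => hy.2 ⟨hyE', htS hy.1⟩⟩
      have hsub2 : u \ t ⊆ t ∆ E' := fun y hy => Or.inr ⟨hy.1.1, hy.2⟩
      have hbound : ∀ v : Set M, MeasurableSet v → v ⊆ S n → v ⊆ t ∆ E' →
          |∫ y in v, w (x, y) ∂μ| ≤ ε / 2 := by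
        intro v hvm hvS hvΔ
        calc |∫ y in v, w (x, y) ∂μ| ≤ ∫ y in v, |w (x, y)| ∂μ :=
              by simpa [Real.norm_eq_abs] using
                norm_integral_le_integral_norm (μ := μ.restrict v) fun y => w (x, y)
          _ = ∫ y in v, |(S n).indicator (fun y => w (x, y)) y| ∂μ := by
              refine setIntegral_congr_fun hvm fun y hy => ?_
              rw [indicator_of_mem (hvS hy)]
          _ ≤ ε / 2 := (hr _ ((measure_mono hvΔ).trans_lt happrox)).le
      have e1 : ∫ y in t, w (x, y) ∂μ
          = ∫ y in t ∩ u, w (x, y) ∂μ + ∫ y in t \ u, w (x, y) ∂μ :=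
        (integral_inter_add_diff hum hintt).symm
      have e2 : ∫ y in u, w (x, y) ∂μ
          = ∫ y in t ∩ u, w (x, y) ∂μ + ∫ y in u \ t, w (x, y) ∂μ := by
        rw [← integral_inter_add_diff htm hintu, inter_comm]
      have b1 := hbound _ (htm.diff hum) (fun y hy => htS hy.1) hsub1
      have b2 := hbound _ (hum.diff htm) (fun y hy => huS hy.1) hsub2
      have := abs_le.1 b1
      have := abs_le.1 b2
      linarith
    -- combine over n
    have hbadm : MeasurableSet {y | ¬ 0 ≤ w' (x, y)} := by
      have : Measurable fun y => w' (x, y) := hw'meas.comp measurable_prodMk_left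
      simpa [not_le] using measurableSet_lt this measurable_const
    have hz : ∀ n, μ ({y | ¬ 0 ≤ w' (x, y)} ∩ S n) = 0 := by
      intro n
      have h1 : ∀ᵐ y ∂(μ.restrict (S n)), 0 ≤ w' (x, y) :=
        (key n).congr (ae_restrict_of_ae (hx3.mono fun y hy => by rw [hy]))
      have := h1
      rw [ae_iff, Measure.restrict_apply hbadm] at this
      exact this
    have : μ {y | ¬ 0 ≤ w' (x, y)} = 0 := by
      have hcover : {y | ¬ 0 ≤ w' (x, y)} = ⋃ n, {y | ¬ 0 ≤ w' (x, y)} ∩ S n := by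
        rw [← inter_iUnion, hSdef, iUnion_spanningSets, inter_univ]
      rw [hcover]
      exact measure_iUnion_null hz
    exact ae_iff.2 this
  have : ∀ᵐ p ∂(μ.prod μ), 0 ≤ w' p := by
    rw [Measure.ae_prod_iff_ae_ae]
    · exact main
    · exact measurableSet_le measurable_const hw'meas
  filter_upwards [this, hww'] with p h1 h2
  rw [h2]; exact h1
section helpers
variable {M : Type*} [MeasurableSpace M] {μ : Measure M}

lemma key_aux [SigmaFinite μ]
    (a b : M × M → ℂ)
    (A B : Lp ℂ 2 μ →L[ℂ] Lp ℂ 2 μ)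
    (hintA : ∀ f : Lp ℂ 2 μ, ∀ᵐ x ∂μ, Integrable (fun y => a (x, y) * f y) μ)
    (hA : ∀ f : Lp ℂ 2 μ, (A f : M → ℂ) =ᵐ[μ] fun x => ∫ y, a (x, y) * f y ∂μ)
    (hintB : ∀ f : Lp ℂ 2 μ, ∀ᵐ x ∂μ, Integrable (fun y => b (x, y) * f y) μ)
    (hB : ∀ f : Lp ℂ 2 μ, (B f : M → ℂ) =ᵐ[μ] fun x => ∫ y, b (x, y) * f y ∂μ)
    (hyp : ∀ f g : Lp ℂ 2 μ, (g : M → ℂ) =ᵐ[μ] (fun x => (‖f x‖ : ℂ)) →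
        ∀ᵐ x ∂μ, (‖B f x‖ : ℂ) ≤ A g x)
    (c : ℂ) (E : Set M) (hE : MeasurableSet E) (hEfin : μ E < ∞) :
    ∀ᵐ x ∂μ,
      IntegrableOn (fun y => (a (x, y)).re) E μ ∧
      IntegrableOn (fun y => (a (x, y)).im) E μ ∧
      IntegrableOn (fun y => (c * b (x, y)).re) E μ ∧
      (∫ y in E, (a (x, y)).im ∂μ = 0) ∧
      ∫ y in E, (c * b (x, y)).re ∂μ ≤ ‖c‖ * ∫ y in E, (a (x, y)).re ∂μ := by
  set f : Lp ℂ 2 μ := indicatorConstLp 2 hE hEfin.ne c with hfdef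
  set g : Lp ℂ 2 μ := indicatorConstLp 2 hE hEfin.ne ((‖c‖ : ℝ) : ℂ) with hgdef
  set f₁ : Lp ℂ 2 μ := indicatorConstLp 2 hE hEfin.ne (1 : ℂ) with hf1def
  have hf' : ⇑f =ᵐ[μ] E.indicator fun _ => c := indicatorConstLp_coeFn
  have hg' : ⇑g =ᵐ[μ] E.indicator fun _ => ((‖c‖ : ℝ) : ℂ) := indicatorConstLp_coeFn
  have hf1' : ⇑f₁ =ᵐ[μ] E.indicator fun _ => (1 : ℂ) := indicatorConstLp_coeFn
  have hfn : (fun x => ((‖f x‖ : ℝ) : ℂ)) =ᵐ[μ] E.indicator fun _ => ((‖c‖ : ℝ) : ℂ) :=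
    hf'.mono fun x hx => by
      simp only [hx]
      by_cases h : x ∈ E <;> simp [h]
  have hg : ⇑g =ᵐ[μ] fun x => ((‖f x‖ : ℝ) : ℂ) := hg'.trans hfn.symm
  have hfn1 : (fun x => ((‖f₁ x‖ : ℝ) : ℂ)) =ᵐ[μ] E.indicator fun _ => (1 : ℂ) :=
    hf1'.mono fun x hx => by
      simp only [hx]
      by_cases h : x ∈ E <;> simp [h]
  have hg1 : ⇑f₁ =ᵐ[μ] fun x => ((‖f₁ x‖ : ℝ) : ℂ) := hf1'.trans hfn1.symm
  have conv : ∀ (k : M × M → ℂ) (x : M) (d : ℂ) (F : Lp ℂ 2 μ),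
      ⇑F =ᵐ[μ] E.indicator (fun _ => d) →
      Integrable (fun y => k (x, y) * F y) μ →
      IntegrableOn (fun y => k (x, y) * d) E μ ∧
        ∫ y, k (x, y) * F y ∂μ = ∫ y in E, k (x, y) * d ∂μ := by
    intro k x d F hF hint
    have eq1 : (fun y => k (x, y) * F y) =ᵐ[μ] E.indicator fun y => k (x, y) * d :=
      hF.mono fun y hy => by
        simp only [hy]
        by_cases h : y ∈ E <;> simp [h]
    exact ⟨(integrable_indicator_iff hE).mp (hint.congr eq1),
      (integral_congr_ae eq1).trans (integral_indicator hE)⟩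
  filter_upwards [hyp f g hg, hyp f₁ f₁ hg1, hB f, hB f₁, hA g, hA f₁,
    hintB f, hintB f₁, hintA g, hintA f₁] with x hx1 hx2 hx3 hx4 hx5 hx6 hx7 hx8 hx9 hx10
  obtain ⟨hIb, hEb⟩ := conv b x c f hf' hx7
  obtain ⟨hIb1, hEb1⟩ := conv b x 1 f₁ hf1' hx8
  obtain ⟨hIa, hEa⟩ := conv a x ((‖c‖ : ℝ) : ℂ) g hg' hx9
  obtain ⟨hIa1, hEa1⟩ := conv a x 1 f₁ hf1' hx10
  have hIa' : IntegrableOn (fun y => a (x, y)) E μ := by simpa using hIa1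
  have hIb' : IntegrableOn (fun y => b (x, y)) E μ := by simpa using hIb1
  have hIare : IntegrableOn (fun y => (a (x, y)).re) E μ := by
    simpa [IntegrableOn] using hIa'.re
  have hIcb : IntegrableOn (fun y => c * b (x, y)) E μ := hIb'.const_mul c
  have hIcbre : IntegrableOn (fun y => (c * b (x, y)).re) E μ := by
    simpa [IntegrableOn] using hIcb.re
  have hIaim : IntegrableOn (fun y => (a (x, y)).im) E μ := by
    simpa [IntegrableOn] using hIa'.im
  refine ⟨hIare, hIaim, hIcbre, ?_, ?_⟩
  · -- imaginary part vanishes, using the c = 1 instance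
    have h6 : A f₁ x = ∫ y in E, a (x, y) ∂μ := by
      rw [hx6, hEa1]
      simp
    have him : (A f₁ x).im = 0 := ((Complex.le_def.mp hx2).2).symm.trans (by simp)
    have : (∫ y in E, a (x, y) ∂μ).im = 0 := by rw [← h6]; exact him
    have hcomm := ContinuousLinearMap.integral_comp_comm Complex.imCLM hIa'
    simpa [this] using hcomm
  · -- the main inequality
    have hre : ‖B f x‖ ≤ (A g x).re := by
      have := (Complex.le_def.mp hx1).1
      simpa using this
    have hAg : (A g x).re = ‖c‖ * ∫ y in E, (a (x, y)).re ∂μ := by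
      rw [hx5, hEa]
      have h1 : (∫ y in E, a (x, y) * ((‖c‖ : ℝ) : ℂ) ∂μ)
          = (∫ y in E, a (x, y) ∂μ) * ((‖c‖ : ℝ) : ℂ) :=
        integral_mul_const _ _
      have h2 := ContinuousLinearMap.integral_comp_comm Complex.reCLM hIa'
      simp only [Complex.reCLM_apply] at h2
      rw [h1, Complex.mul_re]
      simp only [Complex.ofReal_re, Complex.ofReal_im, mul_zero, sub_zero]
      rw [← h2, mul_comm]
    have hBf : B f x = (∫ y in E, b (x, y) ∂μ) * c := by
      rw [hx3, hEb]
      exact integral_mul_const _ _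
    have hLHS : ∫ y in E, (c * b (x, y)).re ∂μ = (c * ∫ y in E, b (x, y) ∂μ).re := by
      have h2 := ContinuousLinearMap.integral_comp_comm Complex.reCLM hIcb
      simp only [Complex.reCLM_apply] at h2
      rw [h2, integral_const_mul]
    rw [hLHS, ← hAg]
    calc (c * ∫ y in E, b (x, y) ∂μ).re ≤ ‖c * ∫ y in E, b (x, y) ∂μ‖ := by
          exact Complex.re_le_norm _
      _ = ‖B f x‖ := by rw [hBf, norm_mul, mul_comm, norm_mul]
      _ ≤ (A g x).re := hre

end helpers

/-- Let `A` and `B` be bounded integral operators on `L²(M; dμ)` with `μ ⊗ μ`-measurable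
integral kernels `a` and `b`, respectively, and suppose that `A` is positivity preserving.
Then `B` is dominated by `A`, i.e. `|Bf| ≤ A|f|` μ-a.e. for every `f ∈ L²(M; dμ)`, if and
only if `|b(x,y)| ≤ a(x,y)` for `μ ⊗ μ`-a.e. `(x,y) ∈ M × M`. -/
theorem integral_operator_dominated_iff_kernel_dominated
    {M : Type*} [MeasurableSpace M] (μ : Measure M) [SigmaFinite μ]
    [MeasureTheory.IsSeparable μ] (hμ : μ ≠ 0)
    (a b : M × M → ℂ) (ha : AEMeasurable a (μ.prod μ)) (hb : AEMeasurable b (μ.prod μ))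
    (A B : Lp ℂ 2 μ →L[ℂ] Lp ℂ 2 μ)
    (hintA : ∀ f : Lp ℂ 2 μ, ∀ᵐ x ∂μ, Integrable (fun y => a (x, y) * f y) μ)
    (hA : ∀ f : Lp ℂ 2 μ, (A f : M → ℂ) =ᵐ[μ] fun x => ∫ y, a (x, y) * f y ∂μ)
    (hintB : ∀ f : Lp ℂ 2 μ, ∀ᵐ x ∂μ, Integrable (fun y => b (x, y) * f y) μ)
    (hB : ∀ f : Lp ℂ 2 μ, (B f : M → ℂ) =ᵐ[μ] fun x => ∫ y, b (x, y) * f y ∂μ)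
    (hpos : ∀ f : Lp ℂ 2 μ, f ≠ 0 → (∀ᵐ x ∂μ, 0 ≤ f x) → (∀ᵐ x ∂μ, 0 ≤ A f x)) :
    (∀ f g : Lp ℂ 2 μ, (g : M → ℂ) =ᵐ[μ] (fun x => (‖f x‖ : ℂ)) →
        ∀ᵐ x ∂μ, (‖B f x‖ : ℂ) ≤ A g x) ↔
      (∀ᵐ p ∂(μ.prod μ), (‖b p‖ : ℂ) ≤ a p) := by
  constructor
  · -- forward direction
    intro hyp
    have key := key_aux a b A B hintA hA hintB hB hyp
    obtain ⟨D, hDcount, hDdense⟩ := TopologicalSpace.exists_countable_dense ℂ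
    set T : Set ℂ := insert (1 : ℂ) D with hT
    have hTcount : T.Countable := hDcount.insert 1
    have hTdense : Dense T := hDdense.mono (Set.subset_insert 1 D)
    -- nonnegativity of ‖c‖ re a - re (c b) for c ∈ T
    have Wc : ∀ c ∈ T, ∀ᵐ p ∂(μ.prod μ), 0 ≤ ‖c‖ * (a p).re - (c * b p).re := by
      intro c _
      refine core μ _ ?_ fun E hE hEfin => (key c E hE hEfin).mono fun x hx => ⟨?_, ?_⟩
      · exact ((Complex.measurable_re.comp_aemeasurable ha).const_mul ‖c‖).sub
          (Complex.measurable_re.comp_aemeasurable (hb.const_mul c))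
      · exact (hx.1.const_mul ‖c‖).sub hx.2.2.1
      · rw [integral_sub (hx.1.const_mul ‖c‖) hx.2.2.1, integral_const_mul]
        have := hx.2.2.2.2
        linarith
    have hWc : ∀ᵐ p ∂(μ.prod μ), ∀ c ∈ T, 0 ≤ ‖c‖ * (a p).re - (c * b p).re :=
      (ae_ball_iff hTcount).2 Wc
    -- the imaginary part of a vanishes a.e.
    have Him1 : ∀ᵐ p ∂(μ.prod μ), 0 ≤ (a p).im := by
      refine core μ _ (Complex.measurable_im.comp_aemeasurable ha)
        fun E hE hEfin => (key 1 E hE hEfin).mono fun x hx =>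
          ⟨hx.2.1, le_of_eq hx.2.2.2.1.symm⟩
    have Him2 : ∀ᵐ p ∂(μ.prod μ), 0 ≤ -(a p).im := by
      refine core μ _ ((Complex.measurable_im.comp_aemeasurable ha).neg)
        fun E hE hEfin => (key 1 E hE hEfin).mono fun x hx => ⟨hx.2.1.neg, ?_⟩
      rw [integral_neg]
      simp [hx.2.2.2.1]
    filter_upwards [hWc, Him1, Him2] with p h1 h2 h3
    have him : (a p).im = 0 := le_antisymm (by linarith) h2
    have hre : ∀ c : ℂ, (c * b p).re ≤ ‖c‖ * (a p).re := by
      have hcl : IsClosed {c : ℂ | (c * b p).re ≤ ‖c‖ * (a p).re} :=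
        isClosed_le (Complex.continuous_re.comp (continuous_mul_right (b p)))
          (continuous_norm.mul continuous_const)
      have hsub : T ⊆ {c : ℂ | (c * b p).re ≤ ‖c‖ * (a p).re} := fun c hc => by
        have := h1 c hc
        simp only [Set.mem_setOf_eq]
        linarith
      intro c
      have h4 : closure T ⊆ {c : ℂ | (c * b p).re ≤ ‖c‖ * (a p).re} :=
        hcl.closure_subset_iff.2 hsub
      rw [hTdense.closure_eq] at h4
      exact h4 (Set.mem_univ c)
    rw [Complex.le_def]
    refine ⟨?_, by simp [him]⟩
    simp only [Complex.ofReal_re]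
    rcases eq_or_ne (b p) 0 with h0 | h0
    · rw [h0, norm_zero]
      have := hre 1
      rw [h0] at this
      simpa using this
    · have h := hre ((starRingEnd ℂ) (b p))
      have hc : ((starRingEnd ℂ) (b p) * b p).re = ‖b p‖ ^ 2 := by
        rw [mul_comm, Complex.mul_conj]
        simp [Complex.normSq_eq_norm_sq, ← Complex.ofReal_pow]
      have hnc : ‖(starRingEnd ℂ) (b p)‖ = ‖b p‖ := RCLike.norm_conj _
      rw [hc, hnc] at h
      have hposn : 0 < ‖b p‖ := norm_pos_iff.mpr h0
      nlinarith
  · -- backward direction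
    intro hk f g hg
    have hk' : ∀ᵐ p ∂(μ.prod μ), ‖b p‖ ≤ (a p).re ∧ (a p).im = 0 :=
      hk.mono fun p hp => by
        obtain ⟨h1, h2⟩ := Complex.le_def.mp hp
        exact ⟨by simpa using h1, by simpa using h2.symm⟩
    filter_upwards [hB f, hA g, hintB f, hintA g, Measure.ae_ae_of_ae_prod hk']
      with x hx1 hx2 hx3 hx4 hx5
    have hgy : ∀ᵐ y ∂μ, g y = ((‖f y‖ : ℝ) : ℂ) := hg
    have hInt2 : Integrable (fun y => (a (x, y)).re * ‖f y‖) μ := by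
      have h := hx4.re
      refine (Integrable.congr h ?_ : Integrable _ μ)
      filter_upwards [hgy, hx5] with y hy1 hy2
      simp only [RCLike.re_to_complex, hy1, Complex.mul_re, Complex.ofReal_re,
        Complex.ofReal_im, mul_zero, sub_zero]
    have hle : (fun y => ‖b (x, y) * f y‖) ≤ᵐ[μ] fun y => (a (x, y)).re * ‖f y‖ := by
      filter_upwards [hx5] with y hy
      rw [norm_mul]
      exact mul_le_mul_of_nonneg_right hy.1 (norm_nonneg _)
    have ineq : ‖∫ y, b (x, y) * f y ∂μ‖ ≤ ∫ y, (a (x, y)).re * ‖f y‖ ∂μ :=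
      (norm_integral_le_integral_norm _).trans (integral_mono_ae hx3.norm hInt2 hle)
    have eqA : (A g) x = ((∫ y, (a (x, y)).re * ‖f y‖ ∂μ : ℝ) : ℂ) := by
      have e1 : ∫ y, a (x, y) * g y ∂μ = ∫ y, (((a (x, y)).re * ‖f y‖ : ℝ) : ℂ) ∂μ := by
        refine integral_congr_ae ?_
        filter_upwards [hgy, hx5] with y hy1 hy2
        have hreal : a (x, y) = ((a (x, y)).re : ℂ) := by
          apply Complex.ext <;> simp [hy2.2]
        simp only [hy1]
        rw [Complex.ofReal_mul]
        conv_lhs => rw [hreal]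
      have e2 : ∫ y, (((a (x, y)).re * ‖f y‖ : ℝ) : ℂ) ∂μ
          = ((∫ y, (a (x, y)).re * ‖f y‖ ∂μ : ℝ) : ℂ) := integral_ofReal
      rw [hx2, e1, e2]
    rw [hx1, eqA]
    exact Complex.real_le_real.mpr ineq
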